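/- Consider the hard-core model at fugacity 1, i.e., the uniform distribution over independent sets. Let T₁ be the path on vertices {ρ₁, a, b} with edges {ρ₁,a}, {a,b}, rooted at ρ₁, and let T₂ be the tree on vertices {ρ₂, a, b, c, d, e, f, g} with edges {ρ₂,a}, {a,b}, {a,c}, {b,d}, {c,e}, {c,f}, {f,g}, rooted at ρ₂. Then T₁ and T₂ have equal effective fields, R_{T₁} = R_{T₂} = 2/3, but different magnetization gaps: M_{T₁} = 5/6 and M_{T₂} = 3/4. -/

import Mathlib

open Finset

attribute [local instance] Classical.propDecidable

set_option maxRecDepth 20000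

noncomputable section

/-- The number of vertices with spin 1 (`true`) in the configuration `σ`. -/
def confOnes {V : Type*} [Fintype V] (σ : V → Bool) : ℕ :=
  (Finset.univ.filter fun v => σ v = true).card

/-- The number of edges of `G` whose two endpoints both receive spin `b` under `σ`. -/
def monoCount {V : Type*} [Fintype V] [DecidableEq V] (G : SimpleGraph V) (b : Bool)
    (σ : V → Bool) : ℕ :=
  (G.edgeFinset.filter fun e => ∀ v ∈ e, σ v = b).card

/-- The Gibbs weight `λ^{|σ|} β^{m₀(σ)} γ^{m₁(σ)}` of a configuration `σ`
(with the convention `0^0 = 1`, which holds for `Monoid.npow`). -/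
def gWeight {V : Type*} [Fintype V] [DecidableEq V] (G : SimpleGraph V) (β γ lam : ℝ)
    (σ : V → Bool) : ℝ :=
  lam ^ confOnes σ * β ^ monoCount G false σ * γ ^ monoCount G true σ

/-- The total Gibbs weight of configurations assigning spin `b` to the root `ρ`. -/
def Zcond {V : Type*} [Fintype V] [DecidableEq V] (G : SimpleGraph V) (β γ lam : ℝ)
    (ρ : V) (b : Bool) : ℝ :=
  ∑ σ : V → Bool, if σ ρ = b then gWeight G β γ lam σ else 0

/-- The effective field `(1/λ)·μ(σ(ρ)=1)/μ(σ(ρ)=0)` of the rooted graph `(G, ρ)`;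
since `μ` assigns probabilities proportional to the Gibbs weights, this ratio of conditional
probabilities equals the corresponding ratio of total weights. -/
def effField {V : Type*} [Fintype V] [DecidableEq V] (G : SimpleGraph V) (β γ lam : ℝ)
    (ρ : V) : ℝ :=
  Zcond G β γ lam ρ true / (lam * Zcond G β γ lam ρ false)

/-- The conditional expectation `E_{σ∼μ}[|σ| | σ(ρ) = b]`, expressed via Gibbs weights. -/
def condMag {V : Type*} [Fintype V] [DecidableEq V] (G : SimpleGraph V) (β γ lam : ℝ)
    (ρ : V) (b : Bool) : ℝ :=
  (∑ σ : V → Bool, if σ ρ = b then (confOnes σ : ℝ) * gWeight G β γ lam σ else 0) /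
    Zcond G β γ lam ρ b

/-- The magnetization gap `E[|σ| | σ(ρ)=1] − E[|σ| | σ(ρ)=0]` of the rooted graph `(G, ρ)`. -/
def magGap {V : Type*} [Fintype V] [DecidableEq V] (G : SimpleGraph V) (β γ lam : ℝ)
    (ρ : V) : ℝ :=
  condMag G β γ lam ρ true - condMag G β γ lam ρ false

/-- `(β, γ)` is antiferromagnetic: both are nonnegative, `βγ < 1`, and not both are zero. -/
def Antiferro (β γ : ℝ) : Prop :=
  0 ≤ β ∧ 0 ≤ γ ∧ β * γ < 1 ∧ (β ≠ 0 ∨ γ ≠ 0)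

/-- The path `T₁` on vertices `{ρ₁, a, b} = {0, 1, 2}` with edges `{ρ₁,a}, {a,b}`,
rooted at `ρ₁ = 0`. -/
def treeT₁ : SimpleGraph (Fin 3) :=
  SimpleGraph.fromEdgeSet {s(0, 1), s(1, 2)}

/-- The tree `T₂` on vertices `{ρ₂, a, b, c, d, e, f, g} = {0,…,7}` with edges
`{ρ₂,a}, {a,b}, {a,c}, {b,d}, {c,e}, {c,f}, {f,g}`, rooted at `ρ₂ = 0`. -/
def treeT₂ : SimpleGraph (Fin 8) :=
  SimpleGraph.fromEdgeSet {s(0, 1), s(1, 2), s(1, 3), s(2, 4), s(3, 5), s(3, 6), s(6, 7)}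

/-! ### Auxiliary machinery -/

/-- The computable count of `true` spins. -/
def cnt {n : ℕ} (σ : Fin n → Bool) : ℕ :=
  (Finset.univ.filter fun v => σ v = true).card

lemma confOnes_eq_cnt {n : ℕ} (σ : Fin n → Bool) : confOnes σ = cnt σ := by
  unfold confOnes cnt
  rw [Finset.filter_congr_decidable]

lemma gWeight_hc {V : Type*} [Fintype V] [DecidableEq V] (G : SimpleGraph V) (σ : V → Bool) :
    gWeight G 1 0 1 σ = 0 ^ monoCount G true σ := by
  simp [gWeight]

lemma Zcond_nat {V : Type*} [Fintype V] [DecidableEq V] (G : SimpleGraph V) (ρ : V) (b : Bool)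
    (g : (V → Bool) → Bool)
    (hg : ∀ σ : V → Bool, (σ ρ = b ∧ monoCount G true σ = 0) ↔ g σ = true) :
    Zcond G 1 0 1 ρ b = ((∑ σ : V → Bool, cond (g σ) 1 0 : ℕ) : ℝ) := by
  rw [Zcond, Nat.cast_sum]
  refine Finset.sum_congr rfl fun σ _ => ?_
  rcases hgb : g σ with _ | _
  · have hn : ¬(σ ρ = b ∧ monoCount G true σ = 0) := by rw [hg]; simp [hgb]
    by_cases h1 : σ ρ = b
    · have h2 : monoCount G true σ ≠ 0 := fun h => hn ⟨h1, h⟩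
      simp [h1, gWeight_hc, zero_pow h2]
    · simp [h1]
  · obtain ⟨h1, h2⟩ := (hg σ).2 (by rw [hgb])
    simp [h1, h2, gWeight_hc]

lemma num_nat {n : ℕ} (G : SimpleGraph (Fin n)) (ρ : Fin n) (b : Bool)
    (g : (Fin n → Bool) → Bool)
    (hg : ∀ σ : Fin n → Bool, (σ ρ = b ∧ monoCount G true σ = 0) ↔ g σ = true) :
    (∑ σ : Fin n → Bool, if σ ρ = b then (confOnes σ : ℝ) * gWeight G 1 0 1 σ else 0)
      = ((∑ σ : Fin n → Bool, cond (g σ) (cnt σ) 0 : ℕ) : ℝ) := by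
  rw [Nat.cast_sum]
  refine Finset.sum_congr rfl fun σ _ => ?_
  rcases hgb : g σ with _ | _
  · have hn : ¬(σ ρ = b ∧ monoCount G true σ = 0) := by rw [hg]; simp [hgb]
    by_cases h1 : σ ρ = b
    · have h2 : monoCount G true σ ≠ 0 := fun h => hn ⟨h1, h⟩
      simp [h1, gWeight_hc, zero_pow h2]
    · simp [h1]
  · obtain ⟨h1, h2⟩ := (hg σ).2 (by rw [hgb])
    simp [h1, h2, gWeight_hc, confOnes_eq_cnt]

lemma edgeT₁ : treeT₁.edgeFinset = ({s(0,1), s(1,2)} : Finset (Sym2 (Fin 3))) := by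
  ext e
  rw [SimpleGraph.mem_edgeFinset]; simp only [treeT₁, SimpleGraph.edgeSet_fromEdgeSet]
  induction e using Sym2.ind with
  | _ x y => revert x y; decide

lemma edgeT₂ : treeT₂.edgeFinset =
    ({s(0,1), s(1,2), s(1,3), s(2,4), s(3,5), s(3,6), s(6,7)} : Finset (Sym2 (Fin 8))) := by
  ext e
  rw [SimpleGraph.mem_edgeFinset]; simp only [treeT₂, SimpleGraph.edgeSet_fromEdgeSet]
  induction e using Sym2.ind with
  | _ x y => revert x y; decide

def g₁ (b : Bool) (σ : Fin 3 → Bool) : Bool :=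
  (σ 0 == b) && (!(σ 0 && σ 1) && !(σ 1 && σ 2))

def g₂ (b : Bool) (σ : Fin 8 → Bool) : Bool :=
  (σ 0 == b) && (!(σ 0 && σ 1) && !(σ 1 && σ 2) && !(σ 1 && σ 3) && !(σ 2 && σ 4)
    && !(σ 3 && σ 5) && !(σ 3 && σ 6) && !(σ 6 && σ 7))

lemma hg₁ (b : Bool) (σ : Fin 3 → Bool) :
    (σ 0 = b ∧ monoCount treeT₁ true σ = 0) ↔ g₁ b σ = true := by
  unfold monoCount g₁
  rw [Finset.filter_congr_decidable, Finset.card_eq_zero, Finset.filter_eq_empty_iff, edgeT₁]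
  simp only [Finset.mem_insert, Finset.mem_singleton, Sym2.mem_iff, forall_eq_or_imp,
    forall_eq, Bool.and_eq_true, Bool.not_eq_true', Bool.and_eq_false_iff, beq_iff_eq]
  generalize σ 0 = x0
  generalize σ 1 = x1
  generalize σ 2 = x2
  simp only [Bool.eq_false_iff]
  tauto

set_option maxHeartbeats 2000000 in
lemma hg₂ (b : Bool) (σ : Fin 8 → Bool) :
    (σ 0 = b ∧ monoCount treeT₂ true σ = 0) ↔ g₂ b σ = true := by
  unfold monoCount g₂
  rw [Finset.filter_congr_decidable, Finset.card_eq_zero, Finset.filter_eq_empty_iff, edgeT₂]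
  simp only [Finset.mem_insert, Finset.mem_singleton, Sym2.mem_iff, forall_eq_or_imp,
    forall_eq, Bool.and_eq_true, Bool.not_eq_true', Bool.and_eq_false_iff, beq_iff_eq]
  generalize σ 0 = x0
  generalize σ 1 = x1
  generalize σ 2 = x2
  generalize σ 3 = x3
  generalize σ 4 = x4
  generalize σ 5 = x5
  generalize σ 6 = x6
  generalize σ 7 = x7
  simp only [Bool.eq_false_iff]
  tauto

lemma sums₁ :
    (∑ σ : Fin 3 → Bool, cond (g₁ true σ) 1 0) = 2 ∧
    (∑ σ : Fin 3 → Bool, cond (g₁ false σ) 1 0) = 3 ∧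
    (∑ σ : Fin 3 → Bool, cond (g₁ true σ) (cnt σ) 0) = 3 ∧
    (∑ σ : Fin 3 → Bool, cond (g₁ false σ) (cnt σ) 0) = 2 := by
  refine ⟨?_, ?_, ?_, ?_⟩ <;> decide

lemma sums₂ :
    (∑ σ : Fin 8 → Bool, cond (g₂ true σ) 1 0) = 24 ∧
    (∑ σ : Fin 8 → Bool, cond (g₂ false σ) 1 0) = 36 ∧
    (∑ σ : Fin 8 → Bool, cond (g₂ true σ) (cnt σ) 0) = 70 ∧
    (∑ σ : Fin 8 → Bool, cond (g₂ false σ) (cnt σ) 0) = 78 := by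
  refine ⟨?_, ?_, ?_, ?_⟩ <;> decide


/-- For the hard-core model at fugacity `1` (the uniform distribution over
independent sets, i.e. the Gibbs distribution with `β = 1`, `γ = 0`, `λ = 1`), the trees `T₁`
and `T₂` above have equal effective fields, `R_{T₁} = R_{T₂} = 2/3`, but different
magnetization gaps: `M_{T₁} = 5/6` and `M_{T₂} = 3/4`. -/
theorem hardcore_example :
    effField treeT₁ 1 0 1 0 = 2 / 3 ∧ effField treeT₂ 1 0 1 0 = 2 / 3 ∧
    magGap treeT₁ 1 0 1 0 = 5 / 6 ∧ magGap treeT₂ 1 0 1 0 = 3 / 4 := by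
  obtain ⟨s1, s2, s3, s4⟩ := sums₁
  obtain ⟨t1, t2, t3, t4⟩ := sums₂
  have z1t : Zcond treeT₁ 1 0 1 0 true = 2 := by rw [Zcond_nat _ _ _ _ (hg₁ true), s1]; norm_num
  have z1f : Zcond treeT₁ 1 0 1 0 false = 3 := by rw [Zcond_nat _ _ _ _ (hg₁ false), s2]; norm_num
  have z2t : Zcond treeT₂ 1 0 1 0 true = 24 := by rw [Zcond_nat _ _ _ _ (hg₂ true), t1]; norm_num
  have z2f : Zcond treeT₂ 1 0 1 0 false = 36 := by rw [Zcond_nat _ _ _ _ (hg₂ false), t2]; norm_num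
  have n1t : (∑ σ : Fin 3 → Bool, if σ 0 = true then (confOnes σ : ℝ) * gWeight treeT₁ 1 0 1 σ else 0) = 3 := by
    rw [num_nat _ _ _ _ (hg₁ true), s3]; norm_num
  have n1f : (∑ σ : Fin 3 → Bool, if σ 0 = false then (confOnes σ : ℝ) * gWeight treeT₁ 1 0 1 σ else 0) = 2 := by
    rw [num_nat _ _ _ _ (hg₁ false), s4]; norm_num
  have n2t : (∑ σ : Fin 8 → Bool, if σ 0 = true then (confOnes σ : ℝ) * gWeight treeT₂ 1 0 1 σ else 0) = 70 := by
    rw [num_nat _ _ _ _ (hg₂ true), t3]; norm_num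
  have n2f : (∑ σ : Fin 8 → Bool, if σ 0 = false then (confOnes σ : ℝ) * gWeight treeT₂ 1 0 1 σ else 0) = 78 := by
    rw [num_nat _ _ _ _ (hg₂ false), t4]; norm_num
  refine ⟨?_, ?_, ?_, ?_⟩
  · rw [effField, z1t, z1f]; norm_num
  · rw [effField, z2t, z2f]; norm_num
  · rw [magGap, condMag, condMag, z1t, z1f, n1t, n1f]; norm_num
  · rw [magGap, condMag, condMag, z2t, z2f, n2t, n2f]; norm_num

end
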